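/- Let R, S ≤ M_n(ℂ) be isomorphic quantum graphs of dimension d. Then for any Hermitian orthonormal basis (a_1,…,a_d) of R and any Hermitian orthonormal basis (b_1,…,b_d) of S, the panoramic polynomials p_R(t_1,…,t_d) = det(t_1 a_1 + ⋯ + t_d a_d) and p_S(t_1,…,t_d) = det(t_1 b_1 + ⋯ + t_d b_d) are orthogonally equivalent. -/
import Mathlib


namespace QG

open Matrix

abbrev Mat (n : ℕ) := Matrix (Fin n) (Fin n) ℂ

/-- `R` is a quantum graph: closed under conjugate transpose and every element is traceless. -/
def IsQuantumGraph {n : ℕ} (R : Submodule ℂ (Mat n)) : Prop :=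
  ∀ a ∈ R, aᴴ ∈ R ∧ a.trace = 0

/-- Conjugation `a ↦ u * a * uᴴ` as a linear map. -/
noncomputable def conjMap {n : ℕ} (u : Mat n) : Mat n →ₗ[ℂ] Mat n :=
  (LinearMap.mulLeft ℂ u).comp (LinearMap.mulRight ℂ uᴴ)

/-- Quantum graphs `R`, `S` are isomorphic if `u R uᴴ = S` for some unitary `u`. -/
def Iso {n : ℕ} (R S : Submodule ℂ (Mat n)) : Prop :=
  ∃ u ∈ Matrix.unitaryGroup (Fin n) ℂ, R.map (conjMap u) = S

/-- `a : Fin d → Mat n` is an orthonormal basis of `R` with respect to the normalized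
trace inner product `⟨a, b⟩ = tr(aᴴ b) / n`. -/
def IsONBasis {n d : ℕ} (R : Submodule ℂ (Mat n)) (a : Fin d → Mat n) : Prop :=
  (∀ i, a i ∈ R) ∧ Submodule.span ℂ (Set.range a) = R ∧
    ∀ i j, ((a i)ᴴ * a j).trace / (n : ℂ) = if i = j then 1 else 0

/-- Expansion of an element of `S` in an orthonormal basis. -/
lemma expand {n d : ℕ} {S : Submodule ℂ (Mat n)} {b : Fin d → Mat n}
    (hb : IsONBasis S b) {x : Mat n} (hx : x ∈ S) :
    x = ∑ j, (((b j)ᴴ * x).trace / (n : ℂ)) • b j := by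
  rw [← hb.2.1] at hx
  induction hx using Submodule.span_induction with
  | mem x h =>
    obtain ⟨k, rfl⟩ := h
    have := hb.2.2
    simp only [this, ite_smul, one_smul, zero_smul]
    rw [Finset.sum_ite_eq' Finset.univ k b]
    simp
  | zero => simp
  | add x y hx hy ihx ihy =>
    simp only [mul_add, Matrix.trace_add, add_div, add_smul, Finset.sum_add_distrib]
    rw [← ihx, ← ihy]
  | smul c x hx ih =>
    simp only [Matrix.mul_smul, Matrix.trace_smul, smul_eq_mul, mul_div_assoc,
      mul_smul]
    rw [← Finset.smul_sum, ← ih]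

/-- isomorphic quantum graphs of dimension `d` have orthogonally equivalent
panoramic polynomials `p_R(t) = det(t₁ a₁ + ⋯ + t_d a_d)`, for any choices of Hermitian
orthonormal bases. -/
theorem stmt4 {n d : ℕ} (R S : Submodule ℂ (Mat n))
    (hR : IsQuantumGraph R) (hS : IsQuantumGraph S)
    (hdR : Module.finrank ℂ ↥R = d) (hdS : Module.finrank ℂ ↥S = d)
    (hiso : Iso R S) (a b : Fin d → Mat n)
    (ha : IsONBasis R a) (haH : ∀ i, (a i).IsHermitian)
    (hb : IsONBasis S b) (hbH : ∀ i, (b i).IsHermitian) :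
    ∃ r ∈ Matrix.orthogonalGroup (Fin d) ℝ,
      ∀ t : Fin d → ℝ,
        (∑ i, (t i : ℂ) • a i).det = (∑ i, ((r.mulVec t) i : ℂ) • b i).det := by
  rcases Nat.eq_zero_or_pos n with hn0 | hnpos
  · subst hn0
    exact ⟨1, one_mem _, fun t => by simp [Matrix.det_isEmpty]⟩
  have hn : (n : ℂ) ≠ 0 := Nat.cast_ne_zero.mpr hnpos.ne'
  obtain ⟨u, hu, hmap⟩ := hiso
  have huu : u * uᴴ = 1 := by
    have := (Matrix.mem_unitaryGroup_iff).mp hu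
    rwa [Matrix.star_eq_conjTranspose] at this
  have huu' : uᴴ * u = 1 := by
    have := (Matrix.mem_unitaryGroup_iff').mp hu
    rwa [Matrix.star_eq_conjTranspose] at this
  set c : Fin d → Fin d → ℂ := fun i j => ((b j)ᴴ * (u * a i * uᴴ)).trace / n with hc
  have hmem : ∀ i, u * a i * uᴴ ∈ S := by
    intro i
    rw [← hmap]
    exact ⟨a i, ha.1 i, by simp [conjMap, mul_assoc]⟩
  have hkey : ∀ i, u * a i * uᴴ = ∑ j, c i j • b j := fun i => expand hb (hmem i)
  have hH : ∀ i, (u * a i * uᴴ)ᴴ = u * a i * uᴴ := by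
    intro i
    simp [Matrix.conjTranspose_mul, (haH i).eq, mul_assoc]
  have hcre : ∀ i j, (starRingEnd ℂ) (c i j) = c i j := by
    intro i j
    rw [hc]
    simp only [map_div₀, Complex.conj_natCast]
    congr 1
    have hM := Matrix.trace_conjTranspose ((b j)ᴴ * (u * a i * uᴴ))
    rw [Matrix.conjTranspose_mul, Matrix.conjTranspose_conjTranspose, hH i,
      Matrix.trace_mul_comm] at hM
    rw [(hbH j).eq] at hM ⊢
    exact hM.symm
  have hcr : ∀ i j, ((c i j).re : ℂ) = c i j := fun i j => Complex.conj_eq_iff_re.mp (hcre i j)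
  have horth : ∀ i k, ((u * a i * uᴴ)ᴴ * (u * a k * uᴴ)).trace / n = if i = k then (1:ℂ) else 0 := by
    intro i k
    have e1 : (u * a i * uᴴ)ᴴ * (u * a k * uᴴ) = u * ((a i)ᴴ * a k) * uᴴ := by
      simp only [Matrix.conjTranspose_mul, Matrix.conjTranspose_conjTranspose, mul_assoc]
      rw [show uᴴ * (u * (a k * uᴴ)) = a k * uᴴ by rw [← mul_assoc, huu', one_mul]]
    rw [e1, Matrix.trace_mul_cycle, ← mul_assoc, huu', one_mul, ha.2.2]
  have hsum : ∀ i k, ∑ j, c i j * c k j = if i = k then (1:ℂ) else 0 := by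
    intro i k
    have h := horth i k
    rw [hkey i, hkey k] at h
    have e2 : ((∑ j, c i j • b j)ᴴ * (∑ l, c k l • b l)).trace / (n:ℂ)
        = ∑ j, ∑ l, (starRingEnd ℂ) (c i j) * c k l * (((b j)ᴴ * b l).trace / n) := by
      simp only [Matrix.conjTranspose_sum, Matrix.conjTranspose_smul, Matrix.sum_mul,
        Matrix.mul_sum, Matrix.smul_mul, Matrix.mul_smul, Matrix.trace_sum, Matrix.trace_smul,
        smul_eq_mul, Finset.sum_div]
      rw [Finset.sum_comm]
      refine Finset.sum_congr rfl fun j _ => ?_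
      rw [Finset.mul_sum, Finset.sum_div]
      refine Finset.sum_congr rfl fun l _ => ?_
      simp only [RCLike.star_def]
      ring
    rw [e2] at h
    simp only [hb.2.2, mul_ite, mul_one, mul_zero, Finset.sum_ite_eq, Finset.mem_univ,
      if_true] at h
    simp only [hcre] at h
    exact h
  set r : Matrix (Fin d) (Fin d) ℝ := Matrix.of fun j i => (c i j).re with hr
  have hrorth : r ∈ Matrix.orthogonalGroup (Fin d) ℝ := by
    rw [Matrix.mem_orthogonalGroup_iff']
    ext i k
    have h2 : (∑ j, (c i j).re * (c k j).re : ℝ) = if i = k then 1 else 0 := by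
      apply Complex.ofReal_injective
      push_cast
      simp only [hcr]
      rw [hsum i k]
      simp [apply_ite (fun x : ℝ => (x : ℂ))]
    simp only [Matrix.mul_apply, Matrix.star_apply, Matrix.one_apply, star_trivial, hr,
      Matrix.of_apply]
    exact h2
  refine ⟨r, hrorth, fun t => ?_⟩
  have hdetu : ∀ M : Mat n, (u * M * uᴴ).det = M.det := by
    intro M
    rw [Matrix.det_mul, Matrix.det_mul]
    have h1 : u.det * uᴴ.det = 1 := by rw [← Matrix.det_mul, huu, Matrix.det_one]
    calc u.det * M.det * uᴴ.det = M.det * (u.det * uᴴ.det) := by ring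
      _ = M.det := by rw [h1, mul_one]
  rw [← hdetu (∑ i, (t i : ℂ) • a i)]
  congr 1
  calc u * (∑ i, (t i:ℂ) • a i) * uᴴ = ∑ i, (t i:ℂ) • (u * a i * uᴴ) := by
        simp [Matrix.mul_sum, Matrix.sum_mul, Matrix.mul_smul, Matrix.smul_mul]
    _ = ∑ i, (t i:ℂ) • ∑ j, c i j • b j := by simp only [hkey]
    _ = ∑ j, (∑ i, (t i:ℂ) * c i j) • b j := by
        simp only [Finset.smul_sum, smul_smul]
        rw [Finset.sum_comm]
        simp only [← Finset.sum_smul]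
    _ = ∑ j, ((r.mulVec t) j : ℂ) • b j := by
        refine Finset.sum_congr rfl fun j _ => ?_
        congr 1
        simp only [Matrix.mulVec, dotProduct, hr, Matrix.of_apply]
        push_cast
        simp only [hcr]
        exact Finset.sum_congr rfl fun i _ => mul_comm _ _


end QG
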